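/- Let 𝒱 be the v-transform with fulcrum δ ∈ (0,1) and generator Ψ, where Ψ is differentiable on (0,1) with strictly positive derivative, let U be uniformly distributed on [0,1] and V = 𝒱(U). Then for every bounded measurable function g : [0,1]² → ℝ, E[g(U, V)] = ∫₀¹ ( Δ(v)·g(𝒱⁻¹(v), v) + (1−Δ(v))·g(𝒱⁻¹(v)+v, v) ) dv; in particular, conditional on V = v ≠ 0, U equals 𝒱⁻¹(v) with probability Δ(v) and 𝒱⁻¹(v)+v with probability 1−Δ(v). -/

import Mathlib

/-!
STATEMENT 2: law of `(U, 𝒱(U))` for uniform `U`: for every bounded measurable `g`,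
`E[g(U,V)] = ∫₀¹ ( Δ(v)·g(𝒱⁻¹(v), v) + (1-Δ(v))·g(𝒱⁻¹(v)+v, v) ) dv`,
i.e. conditionally on `V = v ≠ 0`, `U` takes the value `𝒱⁻¹(v)` with probability
`Δ(v)` and `𝒱⁻¹(v) + v` with probability `1 - Δ(v)`.
-/

open Set MeasureTheory

/-- The v-transform with fulcrum `δ` and generator `Ψ` (with inverse `Ψinv`):
`𝒱(u) = (1-u) - (1-δ)·Ψ(u/δ)` for `u ≤ δ` and `𝒱(u) = u - δ·Ψinv((1-u)/(1-δ))`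
for `u > δ`. -/
noncomputable def vt (δ : ℝ) (Ψ Ψinv : ℝ → ℝ) (u : ℝ) : ℝ :=
  if u ≤ δ then (1 - u) - (1 - δ) * Ψ (u / δ)
  else u - δ * Ψinv ((1 - u) / (1 - δ))

/-- Left-branch inverse `𝒱⁻¹(v) = inf {u ∈ [0,1] : 𝒱 u = v}`. -/
noncomputable def vtInv (V : ℝ → ℝ) (v : ℝ) : ℝ :=
  sInf {u | u ∈ Set.Icc (0:ℝ) 1 ∧ V u = v}

/-- Conditional down probability `Δ(v) = -1 / 𝒱′(𝒱⁻¹(v))`. -/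
noncomputable def vtDelta (V : ℝ → ℝ) (v : ℝ) : ℝ :=
  -1 / deriv V (vtInv V v)

/-- Stochastic inversion function of a v-transform:
`𝒱⁻¹ₛ(v,w) = 𝒱⁻¹(v)` if `w ≤ Δ(v)`, and `v + 𝒱⁻¹(v)` otherwise. -/
noncomputable def vtSInv (V : ℝ → ℝ) (v w : ℝ) : ℝ :=
  if w ≤ vtDelta V v then vtInv V v else v + vtInv V v

theorem stmt_2 {Ω : Type*} [MeasurableSpace Ω] (P : Measure Ω) [IsProbabilityMeasure P]
    (δ : ℝ) (hδ : δ ∈ Set.Ioo (0:ℝ) 1) (Ψ Ψinv : ℝ → ℝ)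
    (hΨc : ContinuousOn Ψ (Set.Icc 0 1)) (hΨm : StrictMonoOn Ψ (Set.Icc 0 1))
    (hΨ0 : Ψ 0 = 0) (hΨ1 : Ψ 1 = 1)
    (hΨinv : ∀ x ∈ Set.Icc (0:ℝ) 1, Ψinv (Ψ x) = x ∧ Ψ (Ψinv x) = x)
    (hΨd : ∀ x ∈ Set.Ioo (0:ℝ) 1, DifferentiableAt ℝ Ψ x ∧ 0 < deriv Ψ x)
    (U : Ω → ℝ) (hUm : Measurable U)
    (hU : Measure.map U P = volume.restrict (Set.Icc (0:ℝ) 1))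
    (g : ℝ → ℝ → ℝ) (hgm : Measurable (Function.uncurry g))
    (hgb : ∃ C, ∀ x y, |g x y| ≤ C) :
    ∫ ω, g (U ω) (vt δ Ψ Ψinv (U ω)) ∂P
      = ∫ v in Set.Icc (0:ℝ) 1,
          (vtDelta (vt δ Ψ Ψinv) v * g (vtInv (vt δ Ψ Ψinv) v) v
            + (1 - vtDelta (vt δ Ψ Ψinv) v) * g (vtInv (vt δ Ψ Ψinv) v + v) v) := by
  obtain ⟨hδ0, hδ1⟩ := hδ
  obtain ⟨C, hC⟩ := hgb
  set V := vt δ Ψ Ψinv with hVdef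
  set φ := vtInv V with hφdef
  set L : ℝ → ℝ := fun u => (1 - u) - (1 - δ) * Ψ (u / δ) with hLdef
  set Dl : ℝ → ℝ := fun u => -1 - (1 - δ) * (deriv Ψ (u / δ) / δ) with hDldef
  -- basic values
  have hL0 : L 0 = 1 := by simp [hLdef, hΨ0]
  have hLδ : L δ = 0 := by
    simp [hLdef, div_self hδ0.ne', hΨ1]
  have hVL : ∀ u, u ≤ δ → V u = L u := by
    intro u hu; simp [hVdef, vt, hu, hLdef]
  -- Ψ facts
  have hΨmem : ∀ x ∈ Icc (0:ℝ) 1, Ψ x ∈ Icc (0:ℝ) 1 := by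
    intro x hx
    constructor
    · rw [← hΨ0]; exact hΨm.monotoneOn ⟨le_refl 0, zero_le_one⟩ hx hx.1
    · rw [← hΨ1]; exact hΨm.monotoneOn hx ⟨zero_le_one, le_refl 1⟩ hx.2
  have hΨsurj : ∀ y ∈ Icc (0:ℝ) 1, ∃ x ∈ Icc (0:ℝ) 1, Ψ x = y := by
    intro y hy
    have := intermediate_value_Icc zero_le_one hΨc
    rw [hΨ0, hΨ1] at this
    obtain ⟨x, hx, hxy⟩ := this hy
    exact ⟨x, hx, hxy⟩
  have hΨinvmem : ∀ x ∈ Icc (0:ℝ) 1, Ψinv x ∈ Icc (0:ℝ) 1 := by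
    intro x hx
    obtain ⟨y, hy, hyx⟩ := hΨsurj x hx
    rw [← hyx, (hΨinv y hy).1]; exact hy
  -- L is continuous and strictly decreasing on [0, δ]
  have hmapsdiv : MapsTo (fun u : ℝ => u / δ) (Icc 0 δ) (Icc 0 1) := by
    intro x hx
    exact ⟨div_nonneg hx.1 hδ0.le, (div_le_one hδ0).2 hx.2⟩
  have hLcont : ContinuousOn L (Icc 0 δ) := by
    refine (continuousOn_const.sub continuousOn_id).sub
      (continuousOn_const.mul (hΨc.comp (continuousOn_id.div_const δ) hmapsdiv))
  have hLanti : StrictAntiOn L (Icc 0 δ) := by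
    intro a ha b hb hab
    have h1 : Ψ (a / δ) < Ψ (b / δ) :=
      hΨm (hmapsdiv ha) (hmapsdiv hb) (by dsimp only; gcongr)
    have h2 : 0 < (1 - δ) * (Ψ (b / δ) - Ψ (a / δ)) :=
      mul_pos (by linarith) (by linarith)
    simp only [hLdef]; nlinarith
  -- characterization of φ on [0,1]
  have hexists : ∀ v ∈ Icc (0:ℝ) 1, ∃ u ∈ Icc (0:ℝ) δ, L u = v := by
    intro v hv
    have h := intermediate_value_Icc' hδ0.le hLcont
    rw [hLδ, hL0] at h
    obtain ⟨u, hu, hLu⟩ := h hv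
    exact ⟨u, hu, hLu⟩
  have hφeq : ∀ v ∈ Icc (0:ℝ) 1, ∀ u ∈ Icc (0:ℝ) δ, L u = v → φ v = u := by
    intro v hv u hu hLu
    have hu1 : u ∈ Icc (0:ℝ) 1 := ⟨hu.1, hu.2.trans hδ1.le⟩
    have hleast : IsLeast {u' | u' ∈ Icc (0:ℝ) 1 ∧ V u' = v} u := by
      constructor
      · exact ⟨hu1, by rw [hVL u hu.2, hLu]⟩
      · rintro u' ⟨hu'1, hVu'⟩
        by_cases hle : u' ≤ δ
        · have h : L u' = L u := by rw [hLu, ← hVu', hVL u' hle]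
          exact (hLanti.injOn ⟨hu'1.1, hle⟩ hu h).ge
        · exact hu.2.trans (not_le.1 hle).le
    exact hleast.csInf_eq
  have hφL : ∀ v ∈ Icc (0:ℝ) 1, φ v ∈ Icc (0:ℝ) δ ∧ L (φ v) = v := by
    intro v hv
    obtain ⟨u, hu, hLu⟩ := hexists v hv
    rw [hφeq v hv u hu hLu]
    exact ⟨hu, hLu⟩
  have hφIoo : ∀ v ∈ Ioo (0:ℝ) 1, φ v ∈ Ioo 0 δ := by
    intro v hv
    obtain ⟨hmem, hLv⟩ := hφL v (Ioo_subset_Icc_self hv)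
    constructor
    · rcases eq_or_lt_of_le hmem.1 with h | h
      · exfalso; rw [← h, hL0] at hLv; exact hv.2.ne hLv.symm
      · exact h
    · rcases eq_or_lt_of_le hmem.2 with h | h
      · exfalso; rw [h, hLδ] at hLv; exact hv.1.ne hLv
      · exact h
  have himgφ : φ '' Ioo 0 1 = Ioo (0:ℝ) δ := by
    apply Subset.antisymm
    · rintro _ ⟨v, hv, rfl⟩; exact hφIoo v hv
    · rintro u hu
      have h1 : L u < 1 := by
        rw [← hL0]; exact hLanti (left_mem_Icc.2 hδ0.le) ⟨hu.1.le, hu.2.le⟩ hu.1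
      have h2 : 0 < L u := by
        rw [← hLδ]; exact hLanti ⟨hu.1.le, hu.2.le⟩ (right_mem_Icc.2 hδ0.le) hu.2
      exact ⟨L u, ⟨h2, h1⟩, hφeq _ ⟨h2.le, h1.le⟩ u ⟨hu.1.le, hu.2.le⟩ rfl⟩
  have hφanti : AntitoneOn φ (Icc (0:ℝ) 1) := by
    intro v1 hv1 v2 hv2 h12
    by_contra hc
    push_neg at hc
    have := hLanti (hφL v1 hv1).1 (hφL v2 hv2).1 hc
    rw [(hφL v1 hv1).2, (hφL v2 hv2).2] at this
    exact absurd this (not_lt.2 h12)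
  have hφinj : InjOn φ (Ioo (0:ℝ) 1) := by
    intro a ha b hb h
    rw [← (hφL a (Ioo_subset_Icc_self ha)).2, ← (hφL b (Ioo_subset_Icc_self hb)).2, h]
  -- continuity of φ on (0,1)
  have hφcont : ∀ v ∈ Ioo (0:ℝ) 1, ContinuousAt φ v := by
    intro v hv
    have hmono : MonotoneOn (fun y => -φ y) (Ioo (0:ℝ) 1) := by
      intro a ha b hb hab
      simp only [neg_le_neg_iff]
      exact hφanti (Ioo_subset_Icc_self ha) (Ioo_subset_Icc_self hb) hab
    have himg : (fun y => -φ y) '' Ioo (0:ℝ) 1 = Ioo (-δ) 0 := by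
      have : (fun y => -φ y) '' Ioo (0:ℝ) 1 = Neg.neg '' (φ '' Ioo (0:ℝ) 1) := by
        rw [Set.image_image]
      rw [this, himgφ, Set.image_neg_Ioo, neg_zero]
    have hcn : ContinuousAt (fun y => -φ y) v := by
      refine continuousAt_of_monotoneOn_of_image_mem_nhds hmono
        (isOpen_Ioo.mem_nhds hv) ?_
      rw [himg]
      have := hφIoo v hv
      exact isOpen_Ioo.mem_nhds ⟨by linarith [this.2], by linarith [this.1]⟩
    have : ContinuousAt (fun y => -(-φ y)) v := hcn.neg
    simpa using this
  -- derivative facts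
  have hDl : ∀ u ∈ Ioo (0:ℝ) δ, HasDerivAt L (Dl u) u := by
    intro u hu
    have h1 : u / δ ∈ Ioo (0:ℝ) 1 := ⟨div_pos hu.1 hδ0, (div_lt_one hδ0).2 hu.2⟩
    have hΨu := hΨd _ h1
    have hc : HasDerivAt (fun x => Ψ (x / δ)) (deriv Ψ (u / δ) * (1 / δ)) u :=
      HasDerivAt.comp u hΨu.1.hasDerivAt ((hasDerivAt_id u).div_const δ)
    have := ((hasDerivAt_id u).const_sub 1).sub (hc.const_mul (1 - δ))
    have heq : Dl u = -1 - (1 - δ) * (deriv Ψ (u / δ) * (1 / δ)) := by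
      simp only [hDldef]; ring
    rw [heq]
    exact this
  have hDlneg : ∀ u ∈ Ioo (0:ℝ) δ, Dl u < -1 := by
    intro u hu
    have h1 : u / δ ∈ Ioo (0:ℝ) 1 := ⟨div_pos hu.1 hδ0, (div_lt_one hδ0).2 hu.2⟩
    have h2 := (hΨd _ h1).2
    have : 0 < (1 - δ) * (deriv Ψ (u / δ) / δ) := mul_pos (by linarith) (div_pos h2 hδ0)
    simp only [hDldef]; linarith
  have hVD : ∀ u ∈ Ioo (0:ℝ) δ, HasDerivAt V (Dl u) u ∧ deriv V u = Dl u := by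
    intro u hu
    have hev : V =ᶠ[nhds u] L := by
      filter_upwards [Iio_mem_nhds hu.2] with x hx
      exact hVL x hx.le
    have h := (hDl u hu).congr_of_eventuallyEq hev
    exact ⟨h, h.deriv⟩
  have hΔeq : ∀ v ∈ Ioo (0:ℝ) 1, vtDelta V v = -(Dl (φ v))⁻¹ := by
    intro v hv
    show -1 / deriv V (vtInv V v) = -(Dl (φ v))⁻¹
    rw [← hφdef, (hVD _ (hφIoo v hv)).2]
    rw [neg_div, one_div]
  have hΔbounds : ∀ v ∈ Ioo (0:ℝ) 1, 0 < vtDelta V v ∧ vtDelta V v < 1 := by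
    intro v hv
    rw [hΔeq v hv]
    have hx := hDlneg _ (hφIoo v hv)
    have hxne : Dl (φ v) ≠ 0 := by linarith
    have hxx : Dl (φ v) * (Dl (φ v))⁻¹ = 1 := mul_inv_cancel₀ hxne
    have hinv : (Dl (φ v))⁻¹ < 0 := inv_lt_zero.2 (by linarith)
    have h3 := mul_lt_mul_of_neg_right hx hinv
    rw [hxx] at h3
    constructor
    · linarith
    · linarith
  have hφderiv : ∀ v ∈ Ioo (0:ℝ) 1, HasDerivAt φ ((Dl (φ v))⁻¹) v := by
    intro v hv
    refine HasDerivAt.of_local_left_inverse (hφcont v hv) (hDl _ (hφIoo v hv))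
      (by have := hDlneg _ (hφIoo v hv); linarith) ?_
    filter_upwards [isOpen_Ioo.mem_nhds hv] with y hy
    exact (hφL y (Ioo_subset_Icc_self hy)).2
  -- T = u + L u is strictly decreasing on [0, δ]
  have hTanti : StrictAntiOn (fun u => u + L u) (Icc (0:ℝ) δ) := by
    refine strictAntiOn_of_deriv_neg (convex_Icc 0 δ) (continuousOn_id.add hLcont) ?_
    intro u hu
    rw [interior_Icc] at hu
    have h : HasDerivAt (fun u => u + L u) (1 + Dl u) u := (hasDerivAt_id u).add (hDl u hu)
    rw [h.deriv]
    have := hDlneg u hu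
    linarith
  have hfr_mem : ∀ v ∈ Ioo (0:ℝ) 1, v + φ v ∈ Ioo δ 1 := by
    intro v hv
    have hm := hφIoo v hv
    have hmc : φ v ∈ Icc (0:ℝ) δ := ⟨hm.1.le, hm.2.le⟩
    have hLv := (hφL v (Ioo_subset_Icc_self hv)).2
    constructor
    · have := hTanti hmc (right_mem_Icc.2 hδ0.le) hm.2
      dsimp only at this
      rw [hLδ, hLv] at this
      linarith
    · have := hTanti (left_mem_Icc.2 hδ0.le) hmc hm.1
      dsimp only at this
      rw [hL0, hLv] at this
      linarith
  have hVfr : ∀ v ∈ Ioo (0:ℝ) 1, V (v + φ v) = v := by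
    intro v hv
    have hm := hφIoo v hv
    have hgt : δ < v + φ v := (hfr_mem v hv).1
    have hLv : (1 - φ v) - (1 - δ) * Ψ (φ v / δ) = v := (hφL v (Ioo_subset_Icc_self hv)).2
    have hmemdiv : φ v / δ ∈ Icc (0:ℝ) 1 := hmapsdiv ⟨hm.1.le, hm.2.le⟩
    have harg : (1 - (v + φ v)) / (1 - δ) = Ψ (φ v / δ) := by
      rw [div_eq_iff (by linarith : (1:ℝ) - δ ≠ 0)]
      linarith
    rw [hVdef]
    show vt δ Ψ Ψinv (v + φ v) = v
    rw [vt, if_neg (not_le.2 hgt), harg, (hΨinv _ hmemdiv).1]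
    field_simp
    ring
  have hfrinj : InjOn (fun v => v + φ v) (Ioo (0:ℝ) 1) := by
    intro a ha b hb h
    have h' : a + φ a = b + φ b := h
    have : V (a + φ a) = V (b + φ b) := by rw [h']
    rwa [hVfr a ha, hVfr b hb] at this
  have himgfr : (fun v => v + φ v) '' Ioo (0:ℝ) 1 = Ioo δ 1 := by
    apply Subset.antisymm
    · rintro _ ⟨v, hv, rfl⟩; exact hfr_mem v hv
    · rintro u hu
      set w : ℝ := δ * Ψinv ((1 - u) / (1 - δ)) with hwdef
      have hargmem : (1 - u) / (1 - δ) ∈ Ioo (0:ℝ) 1 := by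
        constructor
        · exact div_pos (by linarith [hu.2]) (by linarith)
        · rw [div_lt_one (by linarith : (0:ℝ) < 1 - δ)]
          linarith [hu.1]
      have hargmem' : (1 - u) / (1 - δ) ∈ Icc (0:ℝ) 1 := Ioo_subset_Icc_self hargmem
      have hΨinvm := hΨinvmem _ hargmem'
      have hwpos : 0 < w := by
        rcases eq_or_lt_of_le hΨinvm.1 with h | h
        · exfalso
          have := (hΨinv _ hargmem').2
          rw [← h, hΨ0] at this
          exact hargmem.1.ne this
        · exact mul_pos hδ0 h
      have hwle : w ≤ δ := by
        calc w ≤ δ * 1 := by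
              apply mul_le_mul_of_nonneg_left hΨinvm.2 hδ0.le
          _ = δ := mul_one δ
      have hLw : L w = u - w := by
        have hdiv : w / δ = Ψinv ((1 - u) / (1 - δ)) := by
          rw [hwdef]; field_simp
        have h1δ : (1:ℝ) - δ ≠ 0 := by linarith
        simp only [hLdef]
        rw [hdiv, (hΨinv _ hargmem').2]
        field_simp
        ring
      set v : ℝ := u - w with hvdef2
      have hv : v ∈ Ioo (0:ℝ) 1 := by
        constructor
        · have := hu.1; simp only [hvdef2]; linarith
        · have := hu.2; simp only [hvdef2]; linarith
      have hφv : φ v = w := hφeq v (Ioo_subset_Icc_self hv) w ⟨hwpos.le, hwle⟩ (by rw [hLw])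
      exact ⟨v, hv, by show v + φ v = u; rw [hφv, hvdef2]; ring⟩
  -- measurable version of V
  set clamp : ℝ → ℝ := fun x => max 0 (min 1 x) with hclampdef
  have hclampm : Monotone clamp := fun x y h => max_le_max le_rfl (min_le_min le_rfl h)
  have hclampmem : ∀ x, clamp x ∈ Icc (0:ℝ) 1 :=
    fun x => ⟨le_max_left _ _, max_le zero_le_one (min_le_left _ _)⟩
  have hclampid : ∀ x ∈ Icc (0:ℝ) 1, clamp x = x := by
    intro x hx
    simp only [hclampdef]
    rw [min_eq_right hx.2, max_eq_right hx.1]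
  have hΨinvmono : MonotoneOn Ψinv (Icc (0:ℝ) 1) := by
    intro x hx y hy hxy
    by_contra hc
    push_neg at hc
    have := hΨm (hΨinvmem y hy) (hΨinvmem x hx) hc
    rw [(hΨinv x hx).2, (hΨinv y hy).2] at this
    exact absurd hxy (not_le.2 this)
  have hΨemono : Monotone (fun x => Ψ (clamp x)) :=
    fun x y h => hΨm.monotoneOn (hclampmem x) (hclampmem y) (hclampm h)
  have hΨinvemono : Monotone (fun x => Ψinv (clamp x)) :=
    fun x y h => hΨinvmono (hclampmem x) (hclampmem y) (hclampm h)
  set Ve : ℝ → ℝ := fun u => if u ≤ δ then (1 - u) - (1 - δ) * Ψ (clamp (u / δ))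
      else u - δ * Ψinv (clamp ((1 - u) / (1 - δ))) with hVedef
  have hVemeas : Measurable Ve := by
    apply Measurable.ite (measurableSet_le measurable_id measurable_const)
    · exact (measurable_const.sub measurable_id).sub
        (measurable_const.mul (hΨemono.measurable.comp (measurable_id.div_const δ)))
    · exact measurable_id.sub (measurable_const.mul (hΨinvemono.measurable.comp
        ((measurable_const.sub measurable_id).div_const (1 - δ))))
  have hVeV : ∀ u ∈ Icc (0:ℝ) 1, Ve u = V u := by
    intro u hu
    by_cases h : u ≤ δ
    · rw [hVL u h]
      simp only [hVedef, hLdef, if_pos h]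
      rw [hclampid _ ⟨div_nonneg hu.1 hδ0.le, (div_le_one hδ0).2 h⟩]
    · have hmem : (1 - u) / (1 - δ) ∈ Icc (0:ℝ) 1 := by
        constructor
        · exact div_nonneg (by linarith [hu.2]) (by linarith)
        · rw [div_le_one (by linarith : (0:ℝ) < 1 - δ)]
          linarith [not_le.1 h]
      simp only [hVedef, if_neg h, hVdef, vt, if_neg h]
      rw [hclampid _ hmem]
  have hgVae : AEStronglyMeasurable (fun u => g u (V u)) (volume.restrict (Icc (0:ℝ) 1)) := by
    have hmeas : Measurable (fun u => g u (Ve u)) := hgm.comp (measurable_id.prodMk hVemeas)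
    refine hmeas.aestronglyMeasurable.congr ?_
    filter_upwards [ae_restrict_mem measurableSet_Icc] with u hu
    rw [hVeV u hu]
  have hIccsub1 : Ioo (0:ℝ) δ ⊆ Icc 0 1 := fun x hx => ⟨hx.1.le, hx.2.le.trans hδ1.le⟩
  have hIccsub2 : Ioo δ (1:ℝ) ⊆ Icc 0 1 := fun x hx => ⟨hδ0.le.trans hx.1.le, hx.2.le⟩
  have hint : ∀ s : Set ℝ, MeasurableSet s → s ⊆ Icc (0:ℝ) 1 →
      IntegrableOn (fun u => g u (V u)) s := by
    intro s hs hsub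
    refine Integrable.mono' (g := fun _ => C) ?_ ?_ ?_
    · exact integrableOn_const ((measure_mono hsub).trans_lt measure_Icc_lt_top).ne
    · exact hgVae.mono_measure (Measure.restrict_mono hsub le_rfl)
    · exact Filter.Eventually.of_forall fun u => by rw [Real.norm_eq_abs]; exact hC _ _
  -- change of variables
  have hder1 : ∀ v ∈ Ioo (0:ℝ) 1, HasDerivWithinAt φ ((Dl (φ v))⁻¹) (Ioo (0:ℝ) 1) v :=
    fun v hv => (hφderiv v hv).hasDerivWithinAt
  have hder2 : ∀ v ∈ Ioo (0:ℝ) 1,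
      HasDerivWithinAt (fun v => v + φ v) (1 + (Dl (φ v))⁻¹) (Ioo (0:ℝ) 1) v :=
    fun v hv => ((hasDerivAt_id v).add (hφderiv v hv)).hasDerivWithinAt
  have hCoV1 : ∫ u in Ioo (0:ℝ) δ, g u (V u)
      = ∫ v in Ioo (0:ℝ) 1, |(Dl (φ v))⁻¹| • (fun u => g u (V u)) (φ v) := by
    rw [← himgφ]
    exact integral_image_eq_integral_abs_deriv_smul measurableSet_Ioo hder1 hφinj _
  have hCoV2 : ∫ u in Ioo δ (1:ℝ), g u (V u)
      = ∫ v in Ioo (0:ℝ) 1, |1 + (Dl (φ v))⁻¹| • (fun u => g u (V u)) (v + φ v) := by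
    rw [← himgfr]
    exact integral_image_eq_integral_abs_deriv_smul measurableSet_Ioo hder2 hfrinj _
  have hptw1 : ∀ v ∈ Ioo (0:ℝ) 1,
      |(Dl (φ v))⁻¹| • (fun u => g u (V u)) (φ v) = vtDelta V v * g (φ v) v := by
    intro v hv
    have hm := hφIoo v hv
    have hinvneg : (Dl (φ v))⁻¹ < 0 := inv_lt_zero.2 (by linarith [hDlneg _ hm])
    show |(Dl (φ v))⁻¹| * g (φ v) (V (φ v)) = vtDelta V v * g (φ v) v
    rw [abs_of_neg hinvneg, hVL _ hm.2.le, (hφL v (Ioo_subset_Icc_self hv)).2, ← hΔeq v hv]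
  have hptw2 : ∀ v ∈ Ioo (0:ℝ) 1,
      |1 + (Dl (φ v))⁻¹| • (fun u => g u (V u)) (v + φ v) = (1 - vtDelta V v) * g (φ v + v) v := by
    intro v hv
    have hΔ := hΔeq v hv
    have hb := hΔbounds v hv
    have hpos : 0 ≤ 1 + (Dl (φ v))⁻¹ := by
      have h1 := hb.2
      rw [hΔ] at h1
      linarith
    show |1 + (Dl (φ v))⁻¹| * g (v + φ v) (V (v + φ v)) = (1 - vtDelta V v) * g (φ v + v) v
    rw [abs_of_nonneg hpos, hVfr v hv, add_comm v (φ v)]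
    congr 1
    rw [hΔ]
    ring
  have hI1 : IntegrableOn (fun v => vtDelta V v * g (φ v) v) (Ioo (0:ℝ) 1) := by
    have h := (integrableOn_image_iff_integrableOn_abs_deriv_smul measurableSet_Ioo hder1 hφinj
      (fun u => g u (V u))).1 (by rw [himgφ]; exact hint _ measurableSet_Ioo hIccsub1)
    refine h.congr ?_
    filter_upwards [ae_restrict_mem measurableSet_Ioo] with v hv
    exact hptw1 v hv
  have hI2 : IntegrableOn (fun v => (1 - vtDelta V v) * g (φ v + v) v) (Ioo (0:ℝ) 1) := by
    have h := (integrableOn_image_iff_integrableOn_abs_deriv_smul measurableSet_Ioo hder2 hfrinj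
      (fun u => g u (V u))).1 (by rw [himgfr]; exact hint _ measurableSet_Ioo hIccsub2)
    refine h.congr ?_
    filter_upwards [ae_restrict_mem measurableSet_Ioo] with v hv
    exact hptw2 v hv
  -- assembling
  have hdisj : Disjoint (Ioo (0:ℝ) δ) (Ioo δ 1) := by
    rw [Set.disjoint_left]
    rintro x ⟨_, h1⟩ ⟨h2, _⟩
    exact absurd h2 (not_lt.2 h1.le)
  have hsets : (Ioo (0:ℝ) δ ∪ Ioo δ 1 : Set ℝ) =ᵐ[volume] (Icc (0:ℝ) 1 : Set ℝ) := by
    rw [MeasureTheory.ae_eq_set]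
    constructor
    · have : (Ioo (0:ℝ) δ ∪ Ioo δ 1) \ Icc (0:ℝ) 1 = ∅ :=
        Set.diff_eq_empty.2 (Set.union_subset hIccsub1 hIccsub2)
      rw [this, measure_empty]
    · refine measure_mono_null (t := ({0, δ, 1} : Set ℝ)) ?_ ((Set.toFinite _).measure_zero _)
      rintro x ⟨hx, hnx⟩
      simp only [Set.mem_union, Set.mem_Ioo, not_or, not_and_or, not_lt] at hnx
      simp only [Set.mem_insert_iff, Set.mem_singleton_iff]
      rcases eq_or_lt_of_le hx.1 with h0 | h0
      · exact Or.inl h0.symm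
      rcases eq_or_lt_of_le hx.2 with h1 | h1
      swap
      · rcases lt_trichotomy x δ with hd | hd | hd
        · rcases hnx.1 with h | h
          · exact absurd h0 (not_lt.2 h)
          · exact absurd hd (not_lt.2 h)
        · exact Or.inr (Or.inl hd)
        · rcases hnx.2 with h | h
          · exact absurd hd (not_lt.2 h)
          · exact absurd h1 (not_lt.2 h)
      · exact Or.inr (Or.inr h1)
  calc ∫ ω, g (U ω) (V (U ω)) ∂P
      = ∫ u in Icc (0:ℝ) 1, g u (V u) := by
        rw [← hU]
        exact (integral_map hUm.aemeasurable (by rw [hU]; exact hgVae)).symm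
    _ = ∫ u in (Ioo (0:ℝ) δ ∪ Ioo δ 1), g u (V u) := (setIntegral_congr_set hsets).symm
    _ = (∫ u in Ioo (0:ℝ) δ, g u (V u)) + ∫ u in Ioo δ (1:ℝ), g u (V u) :=
        setIntegral_union hdisj measurableSet_Ioo (hint _ measurableSet_Ioo hIccsub1)
          (hint _ measurableSet_Ioo hIccsub2)
    _ = (∫ v in Ioo (0:ℝ) 1, vtDelta V v * g (φ v) v)
          + ∫ v in Ioo (0:ℝ) 1, (1 - vtDelta V v) * g (φ v + v) v := by
        rw [hCoV1, hCoV2]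
        congr 1
        · exact setIntegral_congr_fun measurableSet_Ioo fun v hv => hptw1 v hv
        · exact setIntegral_congr_fun measurableSet_Ioo fun v hv => hptw2 v hv
    _ = ∫ v in Ioo (0:ℝ) 1,
          (vtDelta V v * g (φ v) v + (1 - vtDelta V v) * g (φ v + v) v) :=
        (integral_add hI1 hI2).symm
    _ = ∫ v in Icc (0:ℝ) 1,
          (vtDelta V v * g (φ v) v + (1 - vtDelta V v) * g (φ v + v) v) :=
        integral_Icc_eq_integral_Ioo.symm
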